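/- Let n be a positive integer, H ∈ M_n(ℂ), and let A₂ be a real-linear map from the real vector space of Hermitian n×n complex matrices to itself such that A₂(X) is positive semidefinite whenever X is positive semidefinite. Define A(X) = H X + X H* + A₂(X). If u, v ∈ ℂⁿ are nonzero vectors with v* u = 0 and v* A(u u*) v = 0, then v* H u = (1/‖u‖²) · v* A(u u*) u. -/

import Mathlib

open Matrix
open scoped ComplexOrder

lemma vecMulVec_mulVec' {n : ℕ} (u x : Fin n → ℂ) :
    vecMulVec u (star u) *ᵥ x = (star u ⬝ᵥ x) • u := by
  ext i
  simp [mulVec, dotProduct, vecMulVec_apply, Finset.mul_sum, mul_comm, mul_left_comm]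

lemma posSemidef_vecMulVec' {n : ℕ} (u : Fin n → ℂ) :
    (vecMulVec u (star u)).PosSemidef := by
  constructor
  · ext i j
    simp [conjTranspose_apply, vecMulVec_apply, mul_comm]
  · intro x
    exact (posSemidef_vecMulVec_self_star u).2 x

/-- **Zeros of cross-positive maps of the special form.**
Let `H ∈ M_n(ℂ)` and let `A₂` be a real-linear map on Hermitian `n × n` complex matrices
(i.e. a real-linear map on matrices sending Hermitian matrices to Hermitian matrices) mapping
positive semidefinite matrices to positive semidefinite matrices, and set
`A X = H X + X H* + A₂ X`.  If `u, v ∈ ℂⁿ` are nonzero with `v* u = 0` and `v* A(u u*) v = 0`,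
then `v* H u = (1 / ‖u‖²) ⬝ (v* A(u u*) u)`. -/
theorem cross_positive_zero (n : ℕ) (hn : 0 < n)
    (H : Matrix (Fin n) (Fin n) ℂ)
    (A₂ : Matrix (Fin n) (Fin n) ℂ →ₗ[ℝ] Matrix (Fin n) (Fin n) ℂ)
    (hA₂herm : ∀ X : Matrix (Fin n) (Fin n) ℂ, X.IsHermitian → (A₂ X).IsHermitian)
    (hA₂pos : ∀ X : Matrix (Fin n) (Fin n) ℂ, X.PosSemidef → (A₂ X).PosSemidef)
    (A : Matrix (Fin n) (Fin n) ℂ → Matrix (Fin n) (Fin n) ℂ)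
    (hA : ∀ X : Matrix (Fin n) (Fin n) ℂ, A X = H * X + X * Hᴴ + A₂ X)
    (u v : Fin n → ℂ) (hu : u ≠ 0) (hv : v ≠ 0)
    (horth : star v ⬝ᵥ u = 0)
    (hzero : star v ⬝ᵥ (A (vecMulVec u (star u)) *ᵥ v) = 0) :
    star v ⬝ᵥ (H *ᵥ u) =
      (1 / (star u ⬝ᵥ u)) * (star v ⬝ᵥ (A (vecMulVec u (star u)) *ᵥ u)) := by
  set P : Matrix (Fin n) (Fin n) ℂ := vecMulVec u (star u) with hP
  have hPpsd : P.PosSemidef := posSemidef_vecMulVec' u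
  have horth' : star u ⬝ᵥ v = 0 := by
    rw [star_dotProduct, horth, star_zero]
  have hPv : P *ᵥ v = 0 := by
    rw [hP, vecMulVec_mulVec', horth', zero_smul]
  -- v* A₂(P) v = 0
  have h1 : star v ⬝ᵥ ((H * P) *ᵥ v) = 0 := by
    rw [← mulVec_mulVec, hPv, mulVec_zero, dotProduct_zero]
  have h2 : star v ⬝ᵥ ((P * Hᴴ) *ᵥ v) = 0 := by
    rw [← mulVec_mulVec, hP, vecMulVec_mulVec', dotProduct_smul, horth,
      smul_eq_mul, mul_zero]
  have hA2v : star v ⬝ᵥ (A₂ P *ᵥ v) = 0 := by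
    have := hzero
    rw [hA, add_mulVec, add_mulVec, dotProduct_add, dotProduct_add, h1, h2,
      zero_add, zero_add] at this
    exact this
  have hA2vzero : A₂ P *ᵥ v = 0 :=
    ((hA₂pos P hPpsd).dotProduct_mulVec_zero_iff v).mp hA2v
  -- v* A₂(P) u = 0
  have hA2vu : star v ⬝ᵥ (A₂ P *ᵥ u) = 0 := by
    have hherm : (A₂ P).IsHermitian := hA₂herm P hPpsd.1
    have : star v ⬝ᵥ (A₂ P *ᵥ u) = star (A₂ P *ᵥ v) ⬝ᵥ u := by
      rw [star_mulVec, hherm.eq, ← dotProduct_mulVec]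
    rw [this, hA2vzero, star_zero, zero_dotProduct]
  have huu : star u ⬝ᵥ u ≠ 0 := fun h => hu (dotProduct_star_self_eq_zero.mp h)
  have h3 : star v ⬝ᵥ ((H * P) *ᵥ u) = (star u ⬝ᵥ u) * (star v ⬝ᵥ (H *ᵥ u)) := by
    rw [← mulVec_mulVec, hP, vecMulVec_mulVec', mulVec_smul, dotProduct_smul, smul_eq_mul]
  have h4 : star v ⬝ᵥ ((P * Hᴴ) *ᵥ u) = 0 := by
    rw [← mulVec_mulVec, hP, vecMulVec_mulVec', dotProduct_smul, horth,
      smul_eq_mul, mul_zero]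
  rw [hA, add_mulVec, add_mulVec, dotProduct_add, dotProduct_add, h3, h4, hA2vu,
    add_zero, add_zero, one_div, ← mul_assoc, inv_mul_cancel₀ huu, one_mul]
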